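/- Let L ≥ 1 be an integer, let p and w be as in the explicit parallel-tempering construction and its permutation identification, and let n ≥ 1 be an integer. Then the sum of w(σ) over all permutations σ of {0,…,L} with exactly n non-fixed points (i.e., |{i : σ(i) ≠ i}| = n) is at most (L+1)^{−n}. -/

import Mathlib

/-- The unnormalized weight `N(i,k) = γ^(2(i+1)k − k² + 1) + Σ_{r=0}^{L} γ^((2r+1)(i+1) − r² − r)`
with `γ = (L+1)³`, of the explicit parallel-tempering construction. -/
noncomputable def NPT (L i k : ℕ) : ℝ :=
  (((L : ℝ) + 1) ^ 3) ^ (2 * ((i : ℤ) + 1) * (k : ℤ) - (k : ℤ) ^ 2 + 1) +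
    ∑ r ∈ Finset.range (L + 1),
      (((L : ℝ) + 1) ^ 3) ^ ((2 * (r : ℤ) + 1) * ((i : ℤ) + 1) - (r : ℤ) ^ 2 - (r : ℤ))

/-- `p(i,k) = N(i,k) / Σ_{h=1}^{m} N(i,h)` with `m = L+1`: the probability vector of the
explicit parallel-tempering construction. -/
noncomputable def pPT (L i k : ℕ) : ℝ := NPT L i k / ∑ h ∈ Finset.Icc 1 (L + 1), NPT L i h

/-- The weight `w(σ) = Π_{i=0}^{L} p(i, σ(i)+1)` of a permutation `σ` of `{0,…,L}`
(states of the projected chain are identified with permutations). -/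
noncomputable def wPT (L : ℕ) (σ : Equiv.Perm (Fin (L + 1))) : ℝ :=
  ∏ i : Fin (L + 1), pPT L (i : ℕ) ((σ i : ℕ) + 1)

section Aux

open Finset

private lemma NPT_pos (L i k : ℕ) : 0 < NPT L i k := by
  have h : (0:ℝ) < ((L:ℝ)+1)^3 := by positivity
  unfold NPT
  positivity

private lemma denomPT_pos (L i : ℕ) : 0 < ∑ h ∈ Finset.Icc 1 (L + 1), NPT L i h :=
  Finset.sum_pos (fun h _ => NPT_pos L i h) (Finset.nonempty_Icc.mpr (by omega))

private lemma pPT_nonneg (L i k : ℕ) : 0 ≤ pPT L i k :=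
  div_nonneg (NPT_pos L i k).le (denomPT_pos L i).le

private lemma pPT_le_one (L i k : ℕ) (h1 : 1 ≤ k) (h2 : k ≤ L + 1) : pPT L i k ≤ 1 := by
  rw [pPT, div_le_one (denomPT_pos L i)]
  exact Finset.single_le_sum (fun h _ => (NPT_pos L i h).le)
    (Finset.mem_Icc.mpr ⟨h1, h2⟩)

/-- Key bound: a non-fixed-point probability is at most `1/(L+1)²`. -/
private lemma pPT_le_sq (L i k : ℕ) (hi : i ≤ L) (h1 : 1 ≤ k) (h2 : k ≤ L + 1)
    (hne : k ≠ i + 1) : pPT L i k ≤ 1 / ((L : ℝ) + 1) ^ 2 := by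
  set m : ℝ := (L : ℝ) + 1 with hm
  have hm1 : (1:ℝ) ≤ m := by
    have : (0:ℝ) ≤ (L:ℝ) := Nat.cast_nonneg L
    linarith
  have hγ1 : (1:ℝ) ≤ m ^ 3 := one_le_pow₀ hm1
  have hγ0 : (0:ℝ) < m ^ 3 := by positivity
  set E : ℤ := ((i:ℤ) + 1) ^ 2 with hE
  set S : ℝ := ∑ r ∈ Finset.range (L + 1),
      (m ^ 3) ^ ((2 * (r : ℤ) + 1) * ((i : ℤ) + 1) - (r : ℤ) ^ 2 - (r : ℤ)) with hS
  have hS0 : 0 ≤ S := Finset.sum_nonneg fun r _ => (zpow_pos hγ0 _).le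
  -- each term of S is at most γ^E
  have hSle : S ≤ m * (m ^ 3) ^ E := by
    calc S ≤ ∑ _r ∈ Finset.range (L + 1), (m ^ 3) ^ E := by
          apply Finset.sum_le_sum
          intro r _
          apply zpow_le_zpow_right₀ hγ1
          have hb : (0:ℤ) ≤ ((r:ℤ) - i) * ((r:ℤ) - i - 1) := by
            rcases le_or_gt ((r:ℤ) - i) 0 with h | h
            · nlinarith
            · have h1 : (1:ℤ) ≤ (r:ℤ) - i := h
              nlinarith
          nlinarith [hb]
      _ = m * (m ^ 3) ^ E := by
          rw [Finset.sum_const, Finset.card_range, nsmul_eq_mul]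
          push_cast
          ring
  -- the top term of `NPT L i k` is at most γ^E since k ≠ i+1
  have hfle : (m ^ 3) ^ (2 * ((i : ℤ) + 1) * (k : ℤ) - (k : ℤ) ^ 2 + 1) ≤ (m ^ 3) ^ E := by
    apply zpow_le_zpow_right₀ hγ1
    have hk : (k:ℤ) ≠ (i:ℤ) + 1 := by omega
    have h2' : 1 ≤ ((k:ℤ) - ((i:ℤ) + 1)) ^ 2 := by
      have h := Int.one_le_abs (sub_ne_zero.mpr hk)
      nlinarith [sq_abs ((k:ℤ) - ((i:ℤ) + 1)), abs_nonneg ((k:ℤ) - ((i:ℤ) + 1))]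
    nlinarith [h2']
  -- denominator lower bound: γ^(E+1) + m·S
  have hD : (m ^ 3) ^ E * m ^ 3 + m * S ≤ ∑ h ∈ Finset.Icc 1 (L + 1), NPT L i h := by
    have hsum : ∑ h ∈ Finset.Icc 1 (L + 1), NPT L i h
        = (∑ h ∈ Finset.Icc 1 (L + 1),
            (m ^ 3) ^ (2 * ((i : ℤ) + 1) * (h : ℤ) - (h : ℤ) ^ 2 + 1)) + m * S := by
      unfold NPT
      rw [Finset.sum_add_distrib, Finset.sum_const, Nat.card_Icc, nsmul_eq_mul]
      simp only [Nat.add_sub_cancel]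
      push_cast
      ring
    rw [hsum]
    have hmem : i + 1 ∈ Finset.Icc 1 (L + 1) := Finset.mem_Icc.mpr ⟨by omega, by omega⟩
    have hsingle : (m ^ 3) ^ (2 * ((i : ℤ) + 1) * (((i+1 : ℕ)) : ℤ) - (((i+1:ℕ)) : ℤ) ^ 2 + 1)
        ≤ ∑ h ∈ Finset.Icc 1 (L + 1),
            (m ^ 3) ^ (2 * ((i : ℤ) + 1) * (h : ℤ) - (h : ℤ) ^ 2 + 1) :=
      Finset.single_le_sum
        (f := fun h : ℕ => (m ^ 3) ^ (2 * ((i : ℤ) + 1) * (h : ℤ) - (h : ℤ) ^ 2 + 1))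
        (fun h _ => (zpow_pos hγ0 _).le) hmem
    have heq : (m ^ 3) ^ (2 * ((i : ℤ) + 1) * (((i+1 : ℕ)) : ℤ) - (((i+1:ℕ)) : ℤ) ^ 2 + 1)
        = (m ^ 3) ^ E * m ^ 3 := by
      rw [← zpow_add_one₀ (ne_of_gt hγ0)]
      congr 1
      push_cast
      ring
    linarith [hsingle, heq ▸ hsingle]
  -- conclude
  rw [pPT, div_le_div_iff₀ (denomPT_pos L i) (by positivity)]
  have hNle : NPT L i k ≤ (m ^ 3) ^ E + S := by
    unfold NPT
    rw [hm]
    linarith [hfle]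
  have hγE : (0:ℝ) < (m ^ 3) ^ E := zpow_pos hγ0 _
  rw [one_mul]
  calc NPT L i k * m ^ 2 ≤ ((m ^ 3) ^ E + S) * m ^ 2 := by nlinarith [hNle]
    _ ≤ (m ^ 3) ^ E * m ^ 3 + m * S := by
        nlinarith [mul_le_mul_of_nonneg_left hSle (show (0:ℝ) ≤ m ^ 2 - m by nlinarith),
          hS0, hm1, hγE]
    _ ≤ _ := hD

private lemma descFactorial_le (m n : ℕ) (hn : 2 ≤ n) :
    Nat.descFactorial m n ≤ (m - 1) * m ^ (n - 1) := by
  induction n, hn using Nat.le_induction with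
  | base => simp [Nat.descFactorial]
  | succ n hn ih =>
    rw [Nat.descFactorial_succ]
    calc (m - n) * Nat.descFactorial m n ≤ m * ((m - 1) * m ^ (n - 1)) :=
          Nat.mul_le_mul (Nat.sub_le _ _) ih
      _ = (m - 1) * (m ^ (n - 1) * m) := by ring
      _ = (m - 1) * m ^ (n + 1 - 1) := by
          rw [← pow_succ]
          congr 2
          omega

private lemma count_le (M n : ℕ) :
    (Finset.univ.filter (fun σ : Equiv.Perm (Fin M) =>
        (Finset.univ.filter fun i => σ i ≠ i).card = n)).card ≤ Nat.descFactorial M n := by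
  have hsupp : ∀ σ : Equiv.Perm (Fin M),
      (Finset.univ.filter fun i => σ i ≠ i) = σ.support := by
    intro σ; ext x; simp [Equiv.Perm.mem_support]
  simp only [hsupp]
  rw [Finset.card_eq_sum_card_fiberwise
    (f := fun σ : Equiv.Perm (Fin M) => σ.support)
    (t := (Finset.univ : Finset (Fin M)).powersetCard n)
    (fun σ hσ => by
      rw [Finset.mem_coe, Finset.mem_powersetCard]
      exact ⟨Finset.subset_univ _, (Finset.mem_filter.mp (Finset.mem_coe.mp hσ)).2⟩)]
  have hfiber : ∀ T ∈ (Finset.univ : Finset (Fin M)).powersetCard n,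
      ((Finset.univ.filter (fun σ : Equiv.Perm (Fin M) => σ.support.card = n)).filter
        (fun σ => σ.support = T)).card ≤ Nat.factorial n := by
    intro T hT
    have hTcard : T.card = n := (Finset.mem_powersetCard.mp hT).2
    have key : ((Finset.univ.filter (fun σ : Equiv.Perm (Fin M) => σ.support.card = n)).filter
        (fun σ => σ.support = T)).card
        ≤ (Finset.univ : Finset (Equiv.Perm {x : Fin M // x ∈ T})).card := by
      apply Finset.card_le_card_of_injOn
        (fun σ => if h : ∀ x : Fin M, x ∈ T ↔ σ x ∈ T then σ.subtypePerm (fun x => (h x).symm) else 1)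
        (fun _ _ => Finset.mem_univ _)
      intro σ hσ τ hτ heq
      have hσT : σ.support = T := (Finset.mem_filter.mp (Finset.mem_coe.mp hσ)).2
      have hτT : τ.support = T := (Finset.mem_filter.mp (Finset.mem_coe.mp hτ)).2
      have hcσ : ∀ x : Fin M, x ∈ T ↔ σ x ∈ T := by
        intro x; rw [← hσT]; exact Equiv.Perm.apply_mem_support.symm
      have hcτ : ∀ x : Fin M, x ∈ T ↔ τ x ∈ T := by
        intro x; rw [← hτT]; exact Equiv.Perm.apply_mem_support.symm
      simp only [dif_pos hcσ, dif_pos hcτ] at heq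
      apply Equiv.ext
      intro x
      by_cases hx : x ∈ T
      · have := congrArg (fun e : Equiv.Perm {x : Fin M // x ∈ T} => (e ⟨x, hx⟩ : _).val) heq
        simpa [Equiv.Perm.subtypePerm_apply] using this
      · have h1 : σ x = x := by
          apply Equiv.Perm.notMem_support.mp
          rw [hσT]; exact hx
        have h2 : τ x = x := by
          apply Equiv.Perm.notMem_support.mp
          rw [hτT]; exact hx
        rw [h1, h2]
    rw [Finset.card_univ, Fintype.card_perm, Fintype.card_coe, hTcard] at key
    exact key
  calc ∑ T ∈ (Finset.univ : Finset (Fin M)).powersetCard n,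
        ((Finset.univ.filter (fun σ : Equiv.Perm (Fin M) => σ.support.card = n)).filter
          (fun σ => σ.support = T)).card
      ≤ ∑ _T ∈ (Finset.univ : Finset (Fin M)).powersetCard n, Nat.factorial n :=
        Finset.sum_le_sum hfiber
    _ = Nat.descFactorial M n := by
        rw [Finset.sum_const, smul_eq_mul, Finset.card_powersetCard, Finset.card_univ,
          Fintype.card_fin, Nat.descFactorial_eq_factorial_mul_choose, mul_comm]

end Aux

/-- for `n ≥ 1`, the sum of `w(σ)` over permutations `σ` of `{0,…,L}` with
exactly `n` non-fixed points is at most `(L+1)^{−n}`. -/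
theorem stmt_15 (L : ℕ) (hL : 1 ≤ L) (n : ℕ) (hn : 1 ≤ n) :
    ∑ σ ∈ Finset.univ.filter
        (fun σ : Equiv.Perm (Fin (L + 1)) =>
          (Finset.univ.filter fun i => σ i ≠ i).card = n),
      wPT L σ ≤ ((L : ℝ) + 1) ^ (-(n : ℤ)) := by
  have hm0 : (0:ℝ) < (L:ℝ) + 1 := by positivity
  by_cases hn1 : n = 1
  · subst hn1
    have hempty : (Finset.univ.filter
        (fun σ : Equiv.Perm (Fin (L + 1)) =>
          (Finset.univ.filter fun i => σ i ≠ i).card = 1)) = ∅ := by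
      apply Finset.filter_eq_empty_iff.mpr
      intro σ _
      have hsupp : (Finset.univ.filter fun i => σ i ≠ i) = σ.support := by
        ext x; simp [Equiv.Perm.mem_support]
      rw [hsupp]
      exact σ.card_support_ne_one
    rw [hempty, Finset.sum_empty]
    positivity
  · have hn2 : 2 ≤ n := by omega
    set S := Finset.univ.filter
        (fun σ : Equiv.Perm (Fin (L + 1)) =>
          (Finset.univ.filter fun i => σ i ≠ i).card = n) with hSdef
    have key : ∀ σ ∈ S, wPT L σ ≤ (1 / ((L:ℝ) + 1) ^ 2) ^ n := by
      intro σ hσ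
      have hcard : (Finset.univ.filter fun i => σ i ≠ i).card = n :=
        (Finset.mem_filter.mp hσ).2
      rw [wPT, ← Finset.prod_filter_mul_prod_filter_not Finset.univ (fun i => σ i ≠ i)]
      have h1 : ∏ i ∈ Finset.univ.filter (fun i => σ i ≠ i),
          pPT L (i : ℕ) ((σ i : ℕ) + 1) ≤ (1 / ((L:ℝ) + 1) ^ 2) ^ n := by
        calc ∏ i ∈ Finset.univ.filter (fun i => σ i ≠ i), pPT L (i : ℕ) ((σ i : ℕ) + 1)
            ≤ ∏ _i ∈ Finset.univ.filter (fun i => σ i ≠ i), (1 / ((L:ℝ) + 1) ^ 2) := by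
              apply Finset.prod_le_prod (fun i _ => pPT_nonneg L _ _)
              intro i hi
              have hne : σ i ≠ i := (Finset.mem_filter.mp hi).2
              apply pPT_le_sq L (i : ℕ) ((σ i : ℕ) + 1) (Fin.is_le i) (by omega)
                (by have := (σ i).isLt; omega)
              intro h
              exact hne (Fin.ext (by omega))
          _ = (1 / ((L:ℝ) + 1) ^ 2) ^ n := by
              rw [Finset.prod_const, hcard]
      have h2 : ∏ i ∈ Finset.univ.filter (fun i => ¬σ i ≠ i),
          pPT L (i : ℕ) ((σ i : ℕ) + 1) ≤ 1 := by
        apply Finset.prod_le_one (fun i _ => pPT_nonneg L _ _)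
        intro i _
        exact pPT_le_one L (i : ℕ) ((σ i : ℕ) + 1) (by omega) (by have := (σ i).isLt; omega)
      have h1nn : (0:ℝ) ≤ ∏ i ∈ Finset.univ.filter (fun i => σ i ≠ i),
          pPT L (i : ℕ) ((σ i : ℕ) + 1) :=
        Finset.prod_nonneg (fun i _ => pPT_nonneg L _ _)
      calc (∏ i ∈ Finset.univ.filter (fun i => σ i ≠ i), pPT L (i : ℕ) ((σ i : ℕ) + 1)) *
            ∏ i ∈ Finset.univ.filter (fun i => ¬σ i ≠ i), pPT L (i : ℕ) ((σ i : ℕ) + 1)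
          ≤ ∏ i ∈ Finset.univ.filter (fun i => σ i ≠ i),
              pPT L (i : ℕ) ((σ i : ℕ) + 1) := mul_le_of_le_one_right h1nn h2
        _ ≤ (1 / ((L:ℝ) + 1) ^ 2) ^ n := h1
    have hcount : S.card ≤ L * (L + 1) ^ (n - 1) := by
      calc S.card ≤ Nat.descFactorial (L + 1) n := count_le (L + 1) n
        _ ≤ (L + 1 - 1) * (L + 1) ^ (n - 1) := descFactorial_le (L + 1) n hn2
        _ = L * (L + 1) ^ (n - 1) := by norm_num
    calc ∑ σ ∈ S, wPT L σ ≤ S.card • (1 / ((L:ℝ) + 1) ^ 2) ^ n :=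
          Finset.sum_le_card_nsmul S _ _ key
      _ = (S.card : ℝ) * (1 / ((L:ℝ) + 1) ^ 2) ^ n := nsmul_eq_mul _ _
      _ ≤ ((L * (L + 1) ^ (n - 1) : ℕ) : ℝ) * (1 / ((L:ℝ) + 1) ^ 2) ^ n := by
          apply mul_le_mul_of_nonneg_right _ (by positivity)
          exact_mod_cast hcount
      _ ≤ ((L : ℝ) + 1) ^ (-(n : ℤ)) := by
          obtain ⟨k, rfl⟩ : ∃ k, n = k + 2 := ⟨n - 2, by omega⟩
          rw [zpow_neg, zpow_natCast]
          push_cast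
          have hrw : (L : ℝ) * ((L:ℝ) + 1) ^ (k + 1) * (1 / ((L:ℝ) + 1) ^ 2) ^ (k + 2)
              = ((L:ℝ) / ((L:ℝ) + 1)) * ((((L:ℝ) + 1) ^ (k + 2))⁻¹) := by
            rw [div_pow, one_pow, ← pow_mul]
            field_simp
            ring
          rw [hrw]
          apply mul_le_of_le_one_left (by positivity)
          rw [div_le_one hm0]
          linarith
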